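/- Let k ≥ 1 be an integer, γ = π/(6k), f₁(t) = sin t − cos t, f₂(t) = −sin t − cos t, f₃(t) = −sin t + cos t, and define S₁(k) = ∑_{i=1}^{k} (f₁(iγ) − f₁((i−1)γ)) · [ (f₂(6kγ) − f₂((4k+i)γ)) + (f₃((8k+i−1)γ) − f₃(6kγ)) ]. Then there is an absolute constant K such that for every k ≥ 1, | S₁(k) − (39 − 12√3 + π(√3 − 1))/12 | ≤ K/k. -/

import Mathlib

open Real

/-- `f₁(t) = sin t − cos t`. -/
noncomputable def f1 (t : ℝ) : ℝ := Real.sin t - Real.cos t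

/-- `f₂(t) = −sin t − cos t`. -/
noncomputable def f2 (t : ℝ) : ℝ := -Real.sin t - Real.cos t

/-- `f₃(t) = −sin t + cos t`. -/
noncomputable def f3 (t : ℝ) : ℝ := -Real.sin t + Real.cos t

/-- The angle `γ = π/(6k)`. -/
noncomputable def gam (k : ℕ) : ℝ := Real.pi / (6 * k)

/-- The sum `S₁(k)`. -/
noncomputable def S1 (k : ℕ) : ℝ :=
  ∑ i ∈ Finset.Icc 1 k,
    (f1 ((i : ℝ) * gam k) - f1 (((i : ℝ) - 1) * gam k)) *
      ((f2 ((6 * (k : ℝ)) * gam k) - f2 ((4 * (k : ℝ) + (i : ℝ)) * gam k)) +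
       (f3 ((8 * (k : ℝ) + (i : ℝ) - 1) * gam k) - f3 ((6 * (k : ℝ)) * gam k)))

/-- The telescoping potential function. -/
noncomputable def Gt (k : ℕ) (t : ℝ) : ℝ :=
  (2 * Real.sin (t * gam k) - 2 * Real.cos (t * gam k)
    + 2 * ((Real.sqrt 3 - 1) / 2 * Real.cos (gam k / 2)
        - (Real.sqrt 3 + 1) / 2 * Real.sin (gam k / 2)) * Real.sin (gam k / 2) * t)
      * (2 * Real.cos (gam k / 2))
  + ((Real.sqrt 3 - 1) / 2 * Real.cos (gam k / 2)
      - (Real.sqrt 3 + 1) / 2 * Real.sin (gam k / 2)) *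
    (2 * Real.sin (t * gam k) * Real.cos (t * gam k)
      - Real.cos (t * gam k) ^ 2 + Real.sin (t * gam k) ^ 2)

/-- The purely algebraic core identity. -/
lemma alg_key (A B S C R sw cw : ℝ) (h1 : A ^ 2 + B ^ 2 = 1) (h2 : S ^ 2 + C ^ 2 = 1)
    (hsw : sw = A * (2 * C ^ 2 - 1) - B * (2 * S * C))
    (hcw : cw = B * (2 * C ^ 2 - 1) + A * (2 * S * C)) :
    (A - B - sw + cw) *
      (2 + (R / 2 * B - 1 / 2 * A) + (-(1 / 2) * B - R / 2 * A)
        + (R / 2 * cw + 1 / 2 * sw) + (R / 2 * sw - 1 / 2 * cw)) * (2 * C)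
      = (2 * A - 2 * B - 2 * sw + 2 * cw
          + 2 * ((R - 1) / 2 * C - (R + 1) / 2 * S) * S) * (2 * C)
        + ((R - 1) / 2 * C - (R + 1) / 2 * S) *
          ((2 * A * B - B ^ 2 + A ^ 2) - (2 * sw * cw - cw ^ 2 + sw ^ 2)) := by
  subst hsw hcw
  linear_combination
    ((-4)*C + (-4)*C*R + (10)*C^3 + (6)*C^3*R + (-6)*C^5 + (-2)*C^5*R + (-4)*S*C^2
      + (2)*S*C^4 + (2)*S*C^4*R + (2)*S^2*C + (2)*S^2*C*R + (-6)*S^2*C^3 + (-2)*S^2*C^3*R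
      + (2)*S^3*C^2 + (2)*S^3*C^2*R) * h1
    + ((4)*C + (4)*C*R + (-6)*C^3 + (-2)*C^3*R + (2)*S*C^2 + (2)*S*C^2*R + (-4)*B^2*C
      + (-4)*B^2*C*R + (4)*B^2*C^3 + (4)*B^2*C^3*R + (-4)*B^2*S*C^2 + (-4)*B^2*S*C^2*R
      + (-4)*A*B*C + (-4)*A*B*C*R + (4)*A*B*C^3 + (4)*A*B*C^3*R + (4)*A*B*S*C^2
      + (4)*A*B*S*C^2*R) * h2

/-- Pointwise telescoping identity. -/
lemma key (k : ℕ) (hk : 1 ≤ k) (x : ℝ) :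
    (f1 (x * gam k) - f1 ((x - 1) * gam k)) *
      ((f2 ((6 * (k : ℝ)) * gam k) - f2 ((4 * (k : ℝ) + x) * gam k)) +
       (f3 ((8 * (k : ℝ) + x - 1) * gam k) - f3 ((6 * (k : ℝ)) * gam k)))
      * (2 * Real.cos (gam k / 2))
      = Gt k x - Gt k (x - 1) := by
  have hk0 : (k : ℝ) ≠ 0 := Nat.cast_ne_zero.mpr (by omega)
  set g : ℝ := gam k / 2 with hgdef
  have h6 : (6 * (k : ℝ)) * gam k = π := by
    rw [gam]; field_simp
  have h4 : (4 * (k : ℝ) + x) * gam k = 2 * π / 3 + x * gam k := by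
    rw [gam]; field_simp; ring
  have h8 : (8 * (k : ℝ) + x - 1) * gam k = 4 * π / 3 + (x - 1) * gam k := by
    rw [gam]; field_simp; ring
  have hw : (x - 1) * gam k = x * gam k - 2 * g := by rw [hgdef]; ring
  set u : ℝ := x * gam k with hu
  have hs1 : Real.sin (2 * π / 3 + u) = Real.sqrt 3 / 2 * Real.cos u - 1 / 2 * Real.sin u := by
    rw [show 2 * π / 3 + u = π - (π / 3 - u) by ring, Real.sin_pi_sub, Real.sin_sub,
      Real.sin_pi_div_three, Real.cos_pi_div_three]
  have hc1 : Real.cos (2 * π / 3 + u) = -(1 / 2) * Real.cos u - Real.sqrt 3 / 2 * Real.sin u := by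
    rw [show 2 * π / 3 + u = π - (π / 3 - u) by ring, Real.cos_pi_sub, Real.cos_sub,
      Real.sin_pi_div_three, Real.cos_pi_div_three]; ring
  have hsw : Real.sin ((x - 1) * gam k)
      = Real.sin u * (2 * Real.cos g ^ 2 - 1) - Real.cos u * (2 * Real.sin g * Real.cos g) := by
    rw [hw, Real.sin_sub, Real.cos_two_mul, Real.sin_two_mul]
  have hcw : Real.cos ((x - 1) * gam k)
      = Real.cos u * (2 * Real.cos g ^ 2 - 1) + Real.sin u * (2 * Real.sin g * Real.cos g) := by
    rw [hw, Real.cos_sub, Real.cos_two_mul, Real.sin_two_mul]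
  set sw : ℝ := Real.sin ((x - 1) * gam k) with hswd
  set cw : ℝ := Real.cos ((x - 1) * gam k) with hcwd
  have hs2 : Real.sin (4 * π / 3 + (x - 1) * gam k)
      = -(Real.sqrt 3 / 2 * cw + 1 / 2 * sw) := by
    rw [show 4 * π / 3 + (x - 1) * gam k = π + (π / 3 + (x - 1) * gam k) by ring,
      Real.sin_add, Real.sin_pi, Real.cos_pi, Real.sin_add, Real.sin_pi_div_three,
      Real.cos_pi_div_three, ← hswd, ← hcwd]; ring
  have hc2 : Real.cos (4 * π / 3 + (x - 1) * gam k)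
      = Real.sqrt 3 / 2 * sw - 1 / 2 * cw := by
    rw [show 4 * π / 3 + (x - 1) * gam k = π + (π / 3 + (x - 1) * gam k) by ring,
      Real.cos_add, Real.sin_pi, Real.cos_pi, Real.cos_add, Real.sin_pi_div_three,
      Real.cos_pi_div_three, ← hswd, ← hcwd]; ring
  have halg := alg_key (Real.sin u) (Real.cos u) (Real.sin g) (Real.cos g) (Real.sqrt 3)
    sw cw (Real.sin_sq_add_cos_sq u) (Real.sin_sq_add_cos_sq g) hsw hcw
  simp only [f1, f2, f3, Gt, h6, h4, h8, ← hu, ← hgdef, ← hswd, ← hcwd, hs1, hc1, hs2, hc2,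
    Real.sin_pi, Real.cos_pi]
  linear_combination halg

set_option maxHeartbeats 1000000 in
lemma closed_form (k : ℕ) (hk : 1 ≤ k) :
    S1 k = 13 / 4 - Real.sqrt 3
      - (2 + Real.sqrt 3) * (Real.sin (gam k / 2) / (4 * Real.cos (gam k / 2)))
      + 2 * k * ((Real.sqrt 3 - 1) / 2 * Real.cos (gam k / 2)
          - (Real.sqrt 3 + 1) / 2 * Real.sin (gam k / 2)) * Real.sin (gam k / 2) := by
  have hk0 : (k : ℝ) ≠ 0 := Nat.cast_ne_zero.mpr (by omega)
  set g : ℝ := gam k / 2 with hgdef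
  have hgpos : 0 < g := by
    rw [hgdef, gam]
    have : (0:ℝ) < (k:ℝ) := by positivity
    positivity
  have hglt : g < π / 2 := by
    rw [hgdef, gam]
    rw [div_div]
    rw [div_lt_div_iff₀ (by positivity) (by norm_num)]
    have hk1 : (1:ℝ) ≤ (k:ℝ) := by exact_mod_cast hk
    nlinarith [Real.pi_pos]
  have hcpos : 0 < Real.cos g := Real.cos_pos_of_mem_Ioo ⟨by linarith, hglt⟩
  have hc2 : (2 : ℝ) * Real.cos g ≠ 0 := by positivity
  apply mul_right_cancel₀ hc2
  have step1 : S1 k * (2 * Real.cos g) = Gt k k - Gt k 0 := by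
    rw [S1, Finset.sum_mul]
    have : ∀ i ∈ Finset.Icc 1 k,
        (f1 ((i : ℝ) * gam k) - f1 (((i : ℝ) - 1) * gam k)) *
          ((f2 ((6 * (k : ℝ)) * gam k) - f2 ((4 * (k : ℝ) + (i : ℝ)) * gam k)) +
           (f3 ((8 * (k : ℝ) + (i : ℝ) - 1) * gam k) - f3 ((6 * (k : ℝ)) * gam k)))
          * (2 * Real.cos g)
        = Gt k i - Gt k ((i : ℝ) - 1) := by
      intro i _
      exact key k hk (i : ℝ)
    rw [Finset.sum_congr rfl this]
    rw [← Finset.Ico_add_one_right_eq_Icc, Finset.sum_Ico_eq_sum_range]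
    try simp only [Nat.add_sub_cancel]
    have : ∀ j, Gt k ((1 + j : ℕ) : ℝ) - Gt k (((1 + j : ℕ) : ℝ) - 1)
        = (fun n : ℕ => Gt k n) (j + 1) - (fun n : ℕ => Gt k n) j := by
      intro j
      have h1 : ((1 + j : ℕ) : ℝ) = ((j + 1 : ℕ) : ℝ) := by push_cast; ring
      have h2 : (((j + 1 : ℕ) : ℝ) - 1) = ((j : ℕ) : ℝ) := by push_cast; ring
      rw [h1, h2]
    rw [Finset.sum_congr rfl (fun j _ => this j), Finset.sum_range_sub (fun n : ℕ => Gt k n)]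
    simp [Nat.succ_sub_one]
  rw [step1]
  have hkg : (k : ℝ) * gam k = π / 6 := by rw [gam]; field_simp
  have h0g : (0 : ℝ) * gam k = 0 := by ring
  have hr : Real.sqrt 3 ^ 2 = 3 := Real.sq_sqrt (by norm_num)
  have hsplit : (13 / 4 - Real.sqrt 3
      - (2 + Real.sqrt 3) * (Real.sin g / (4 * Real.cos g))
      + 2 * k * ((Real.sqrt 3 - 1) / 2 * Real.cos g
          - (Real.sqrt 3 + 1) / 2 * Real.sin g) * Real.sin g) * (2 * Real.cos g)
      = (13 / 4 - Real.sqrt 3 + 2 * k * ((Real.sqrt 3 - 1) / 2 * Real.cos g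
          - (Real.sqrt 3 + 1) / 2 * Real.sin g) * Real.sin g) * (2 * Real.cos g)
        - (2 + Real.sqrt 3) * (Real.sin g / 2) := by
    field_simp; ring
  rw [Gt, Gt, hkg, h0g, Real.sin_pi_div_six, Real.cos_pi_div_six, Real.sin_zero,
    Real.cos_zero, ← hgdef, hsplit]
  linear_combination ((3:ℝ)/8 * Real.cos g - 1/8 * Real.cos g * Real.sqrt 3
    - 1/8 * Real.sin g + 1/8 * Real.sin g * Real.sqrt 3) * hr

set_option maxHeartbeats 1000000 in
theorem S1_asymptotics :
    ∃ K : ℝ, ∀ k : ℕ, 1 ≤ k →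
      |S1 k - (39 - 12 * Real.sqrt 3 + Real.pi * (Real.sqrt 3 - 1)) / 12| ≤ K / k := by
  use 10
  intro k hk
  have hk0 : (0:ℝ) < (k:ℝ) := by exact_mod_cast Nat.pos_of_ne_zero (by omega)
  set g : ℝ := gam k / 2 with hgdef
  have hg_eq : g = π / (12 * k) := by rw [hgdef, gam]; ring
  have hgpos : 0 < g := by rw [hg_eq]; positivity
  have hkg : (k : ℝ) * g = π / 12 := by rw [hg_eq]; field_simp
  have hpi2 : π < 3.15 := Real.pi_lt_d2
  have hgsmall : g ≤ 27 / 100 := by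
    rw [hg_eq]
    rw [div_le_iff₀ (by positivity)]
    have hk1 : (1:ℝ) ≤ (k:ℝ) := by exact_mod_cast hk
    nlinarith
  set s : ℝ := Real.sin g with hsdef
  set c : ℝ := Real.cos g with hcdef
  have hs0 : 0 ≤ s := Real.sin_nonneg_of_nonneg_of_le_pi (le_of_lt hgpos)
    (by nlinarith [Real.pi_gt_three])
  have hs_ub : s ≤ g := Real.sin_le (le_of_lt hgpos)
  have hs_lb : g - g ^ 3 / 4 ≤ s := by have h := Real.sin_gt_sub_cube hgpos; nlinarith [pow_pos hgpos 3]
  have hc_ub : c ≤ 1 := Real.cos_le_one g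
  have hc_lb : 1 - g ^ 2 / 2 ≤ c := le_of_lt (Real.one_sub_sq_div_two_lt_cos (ne_of_gt hgpos))
  have hc_half : (1:ℝ) / 2 ≤ c := by nlinarith
  have hcs_ub : c * s ≤ g := by nlinarith [mul_le_mul_of_nonneg_right hc_ub hs0]
  have hcs_lb : g - g ^ 3 ≤ c * s := by
    nlinarith [mul_le_mul_of_nonneg_left hs_lb (show (0:ℝ) ≤ c by linarith),
      mul_le_mul_of_nonneg_right hc_lb (show (0:ℝ) ≤ g - g ^ 3 / 4 by nlinarith),
      hgpos, hgsmall]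
  have hr3 : Real.sqrt 3 ^ 2 = 3 := Real.sq_sqrt (by norm_num)
  have hr_lb : (17:ℝ)/10 < Real.sqrt 3 := by nlinarith [Real.sqrt_nonneg 3]
  have hr_ub : Real.sqrt 3 < (174:ℝ)/100 := by nlinarith [Real.sqrt_nonneg 3]
  have hq_ub : s / (4 * c) ≤ s / 2 := by
    apply div_le_div_of_nonneg_left hs0 (by norm_num)
    linarith
  have hq_lb : 0 ≤ s / (4 * c) := by
    apply div_nonneg hs0; linarith
  have hk_cs : (k:ℝ) * (g - c * s) ≤ π / 12 * g ^ 2 := by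
    calc (k:ℝ) * (g - c * s) ≤ (k:ℝ) * g ^ 3 := by
          apply mul_le_mul_of_nonneg_left (by linarith) (le_of_lt hk0)
      _ = ((k:ℝ) * g) * g ^ 2 := by ring
      _ = π / 12 * g ^ 2 := by rw [hkg]
  have hk_cs' : 0 ≤ (k:ℝ) * (g - c * s) := by
    apply mul_nonneg (le_of_lt hk0); linarith
  have hk_s2 : (k:ℝ) * s ^ 2 ≤ π / 12 * g := by
    calc (k:ℝ) * s ^ 2 ≤ (k:ℝ) * g ^ 2 := by
          apply mul_le_mul_of_nonneg_left (by nlinarith) (le_of_lt hk0)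
      _ = ((k:ℝ) * g) * g := by ring
      _ = π / 12 * g := by rw [hkg]
  have hk_s2' : 0 ≤ (k:ℝ) * s ^ 2 := by positivity
  -- three pieces
  have h1a : 0 ≤ (2 + Real.sqrt 3) * (s / (4 * c)) :=
    mul_nonneg (by nlinarith) hq_lb
  have h1b : (2 + Real.sqrt 3) * (s / (4 * c)) ≤ 2 * g := by
    nlinarith [mul_le_mul_of_nonneg_left hq_ub (show (0:ℝ) ≤ 2 + Real.sqrt 3 by nlinarith),
      hs_ub, hs0, hq_lb]
  have h2a : 0 ≤ (Real.sqrt 3 - 1) * ((k:ℝ) * (g - c * s)) :=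
    mul_nonneg (by nlinarith) hk_cs'
  have h2b : (Real.sqrt 3 - 1) * ((k:ℝ) * (g - c * s)) ≤ g := by
    nlinarith [mul_le_mul_of_nonneg_left hk_cs (show (0:ℝ) ≤ Real.sqrt 3 - 1 by nlinarith),
      hgpos, hgsmall, mul_pos hgpos hgpos]
  have h3a : 0 ≤ (Real.sqrt 3 + 1) * ((k:ℝ) * s ^ 2) :=
    mul_nonneg (by nlinarith) hk_s2'
  have h3b : (Real.sqrt 3 + 1) * ((k:ℝ) * s ^ 2) ≤ 2 * g := by
    nlinarith [mul_le_mul_of_nonneg_left hk_s2 (show (0:ℝ) ≤ Real.sqrt 3 + 1 by nlinarith),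
      hgpos, hgsmall]
  rw [closed_form k hk, ← hgdef, ← hsdef, ← hcdef]
  have h12 : π * (Real.sqrt 3 - 1) / 12 = (Real.sqrt 3 - 1) * ((k:ℝ) * g) := by
    rw [hkg]; ring
  have hexp : 13 / 4 - Real.sqrt 3 - (2 + Real.sqrt 3) * (s / (4 * c))
      + 2 * k * ((Real.sqrt 3 - 1) / 2 * c - (Real.sqrt 3 + 1) / 2 * s) * s
      - (39 - 12 * Real.sqrt 3 + π * (Real.sqrt 3 - 1)) / 12
      = -((2 + Real.sqrt 3) * (s / (4 * c)))
        - (Real.sqrt 3 - 1) * ((k:ℝ) * (g - c * s))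
        - (Real.sqrt 3 + 1) * ((k:ℝ) * s ^ 2) := by
    linear_combination -h12
  have hmain : |13 / 4 - Real.sqrt 3 - (2 + Real.sqrt 3) * (s / (4 * c))
      + 2 * k * ((Real.sqrt 3 - 1) / 2 * c - (Real.sqrt 3 + 1) / 2 * s) * s
      - (39 - 12 * Real.sqrt 3 + π * (Real.sqrt 3 - 1)) / 12| ≤ 6 * g := by
    rw [abs_le]
    constructor
    · rw [hexp]; linarith
    · rw [hexp]; linarith
  refine le_trans hmain ?_
  rw [le_div_iff₀ hk0]
  nlinarith [hkg]
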